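/- Let q₀,...,qₙ be positive integers with gcd(q₀,...,qₙ) = 1, δ = lcm(q₀,...,qₙ). Suppose A is the n×(n+1) real matrix whose first row is (−q₁/g₀₁, q₀/g₀₁, 0, ..., 0) with g₀₁ = gcd(q₀,q₁), and whose s-th row (2 ≤ s ≤ n) is (x_{s0} − δ/q₀, x_{s1}, ..., x_{s(s−1)}, g_{s−1}/g_s, 0, ..., 0), where gₛ = gcd(q₀,...,qₛ) and x_{s0}q₀ + ⋯ + x_{s(s−1)}q_{s−1} + (g_{s−1}/g_s)qₛ = δ with all x_{sj} integers. Then the generalized cross product of the rows of A equals (q₀, q₁, ..., qₙ), and in particular the n-dimensional volume of the parallelotope spanned by the rows is √(q₀² + ⋯ + qₙ²). -/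

import Mathlib

/-- Generalized cross product of `n` vectors in `ℝ^{n+1}`: the `k`-th coordinate is
`(-1)^k` times the `n × n` minor obtained by deleting column `k` from the matrix whose
rows are the given vectors. -/
def crossProd {n : ℕ} (v : Fin n → Fin (n + 1) → ℝ) : Fin (n + 1) → ℝ :=
  fun k => (-1) ^ (k : ℕ) * Matrix.det (Matrix.of fun i j : Fin n => v i (Fin.succAbove k j))

/-- `gcd(q₀,...,qₜ)`. -/
def partialGcd {n : ℕ} (q : Fin (n + 1) → ℕ) (t : ℕ) : ℕ :=
  (Finset.univ.filter fun i : Fin (n + 1) => (i : ℕ) ≤ t).gcd q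

section aux
variable {n : ℕ} (q : Fin (n + 1) → ℕ)

lemma partialGcd_succ_dvd (t : ℕ) : partialGcd q (t + 1) ∣ partialGcd q t :=
  Finset.dvd_gcd fun i hi => Finset.gcd_dvd (by
    simp only [Finset.mem_filter, Finset.mem_univ, true_and] at hi ⊢
    omega)

lemma partialGcd_dvd_zero (t : ℕ) : partialGcd q t ∣ partialGcd q 0 := by
  induction t with
  | zero => exact dvd_rfl
  | succ t ih => exact (partialGcd_succ_dvd q t).trans ih

lemma partialGcd_pos (hq : 0 < q 0) (t : ℕ) : 0 < partialGcd q t := by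
  rcases Nat.eq_zero_or_pos (partialGcd q t) with h | h
  · exfalso
    have h0 : (0 : Fin (n + 1)) ∈ Finset.univ.filter fun i : Fin (n + 1) => (i : ℕ) ≤ t := by
      simp
    have := (Finset.gcd_eq_zero_iff.mp h) 0 h0
    omega
  · exact h

lemma partialGcd_zero_eq : partialGcd q 0 = q 0 := by
  have h : (Finset.univ.filter fun i : Fin (n + 1) => (i : ℕ) ≤ 0) = {0} := by
    ext i
    simp only [Finset.mem_filter, Finset.mem_univ, true_and, Finset.mem_singleton, Nat.le_zero]
    exact Fin.val_eq_zero_iff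
  rw [partialGcd, h, Finset.gcd_singleton]
  simp

lemma partialGcd_last : partialGcd q n = Finset.univ.gcd q := by
  unfold partialGcd
  congr 1
  apply Finset.filter_true_of_mem
  intro i _
  exact Nat.lt_succ_iff.mp i.isLt

lemma prod_range_quot (hq : 0 < q 0) (m : ℕ) :
    (∏ i ∈ Finset.range m, partialGcd q i / partialGcd q (i + 1))
      = partialGcd q 0 / partialGcd q m := by
  induction m with
  | zero => simp [Nat.div_self (partialGcd_pos q hq 0)]
  | succ m ih =>
    rw [Finset.prod_range_succ, ih,
      Nat.div_mul_div_comm (partialGcd_dvd_zero q m) (partialGcd_succ_dvd q m),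
      mul_comm (partialGcd q 0),
      Nat.mul_div_mul_left _ _ (partialGcd_pos q hq m)]

end aux

lemma sum_mul_crossProd {n : ℕ} (A : Fin n → Fin (n + 1) → ℝ) (w : Fin (n + 1) → ℝ) :
    ∑ j, w j * crossProd A j = Matrix.det (Matrix.of (Fin.cons w A)) := by
  rw [Matrix.det_succ_row_zero]
  refine Finset.sum_congr rfl fun j _ => ?_
  rw [crossProd]
  have : (Matrix.of (Fin.cons w A)).submatrix Fin.succ j.succAbove
      = Matrix.of fun i j' : Fin n => A i (Fin.succAbove j j') := by
    ext i j'
    simp [Matrix.submatrix]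
  rw [this]
  simp [Matrix.of_apply, Fin.cons_zero]
  ring

lemma crossProd_orth {n : ℕ} (A : Fin n → Fin (n + 1) → ℝ) (s : Fin n) :
    ∑ j, A s j * crossProd A j = 0 := by
  rw [sum_mul_crossProd]
  apply Matrix.det_zero_of_row_eq (i := 0) (j := s.succ) (Fin.succ_ne_zero s).symm
  funext j
  simp [Matrix.of_apply]


set_option maxHeartbeats 1600000 in
/-- The cross product of the rows `e₁,...,eₙ` of the matrix `A` constructed in the paper
equals `(q₀,...,qₙ)`; in particular the volume of the parallelotope spanned by the rows
is `√(q₀²+⋯+qₙ²)`. -/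
theorem crossProd_basis_eq {n : ℕ} (q : Fin (n + 1) → ℕ) (hq : ∀ i, 0 < q i)
    (hgcd : Finset.univ.gcd q = 1)
    (A : Fin n → Fin (n + 1) → ℝ) (x : Fin n → Fin (n + 1) → ℤ)
    (hsum : ∀ s : Fin n,
      (∑ j : Fin (n + 1), if (j : ℕ) ≤ (s : ℕ) then x s j * (q j : ℤ) else 0) +
        ((partialGcd q (s : ℕ) / partialGcd q ((s : ℕ) + 1) : ℕ) : ℤ) * (q s.succ : ℤ) =
        ((Finset.univ.lcm q : ℕ) : ℤ))
    (hA : ∀ (s : Fin n) (j : Fin (n + 1)), A s j =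
      if (j : ℕ) ≤ (s : ℕ) then
        (x s j : ℝ) - (if (j : ℕ) = 0 then ((Finset.univ.lcm q / q 0 : ℕ) : ℝ) else 0)
      else if (j : ℕ) = (s : ℕ) + 1 then
        ((partialGcd q (s : ℕ) / partialGcd q ((s : ℕ) + 1) : ℕ) : ℝ)
      else 0) :
    crossProd A = (fun k => (q k : ℝ)) ∧
    Real.sqrt (∑ k, (crossProd A k) ^ 2) = Real.sqrt (∑ k, (q k : ℝ) ^ 2) := by
  obtain ⟨c, hc⟩ : ∃ c : Fin n → ℕ,
      ∀ s : Fin n, c s = partialGcd q (s : ℕ) / partialGcd q ((s : ℕ) + 1) :=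
    ⟨_, fun _ => rfl⟩
  set δ : ℕ := Finset.univ.lcm q with hδ
  have hq0 : 0 < q 0 := hq 0
  have hdvdδ : q 0 ∣ δ := Finset.dvd_lcm (Finset.mem_univ 0)
  have hδq0 : (δ / q 0) * q 0 = δ := Nat.div_mul_cancel hdvdδ
  have hcpos : ∀ s : Fin n, 0 < c s := fun s => by
    rw [hc]
    exact Nat.div_pos (Nat.le_of_dvd (partialGcd_pos q hq0 _) (partialGcd_succ_dvd q _))
      (partialGcd_pos q hq0 _)
  -- orthogonality of q to each row
  have orth_q : ∀ s : Fin n, ∑ j : Fin (n + 1), A s j * (q j : ℝ) = 0 := by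
    intro s
    have split : ∀ j : Fin (n + 1), A s j =
        (if (j : ℕ) ≤ (s : ℕ) then (x s j : ℝ)
          else if (j : ℕ) = (s : ℕ) + 1 then (c s : ℝ) else 0) -
        (if (j : ℕ) = 0 then ((δ / q 0 : ℕ) : ℝ) else 0) := by
      intro j
      rw [hA, hc]
      split_ifs <;> first | ring1 | (exfalso; omega)
    have e1 : ∑ j : Fin (n + 1), A s j * (q j : ℝ)
        = (∑ j : Fin (n + 1), ((if (j : ℕ) ≤ (s : ℕ) then (x s j : ℝ)
            else if (j : ℕ) = (s : ℕ) + 1 then (c s : ℝ) else 0) * q j))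
          - ∑ j : Fin (n + 1), (if (j : ℕ) = 0 then ((δ / q 0 : ℕ) : ℝ) else 0) * q j := by
      rw [← Finset.sum_sub_distrib]
      refine Finset.sum_congr rfl fun j _ => ?_
      rw [split j]; ring
    have e2 : ∑ j : Fin (n + 1), (if (j : ℕ) = 0 then ((δ / q 0 : ℕ) : ℝ) else 0) * (q j : ℝ)
        = (δ : ℝ) := by
      have h0 : ∀ j : Fin (n + 1), ((j : ℕ) = 0) = (j = (0 : Fin (n + 1))) := by
        intro j; exact propext Fin.val_eq_zero_iff
      simp only [h0, ite_mul, zero_mul]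
      rw [Finset.sum_ite_eq' Finset.univ (0 : Fin (n + 1))]
      simp only [Finset.mem_univ, if_true]
      rw [← Nat.cast_mul, hδq0]
    have e3 : ∑ j : Fin (n + 1), ((if (j : ℕ) ≤ (s : ℕ) then (x s j : ℝ)
          else if (j : ℕ) = (s : ℕ) + 1 then (c s : ℝ) else 0) * q j)
        = (∑ j : Fin (n + 1), if (j : ℕ) ≤ (s : ℕ) then (x s j : ℝ) * q j else 0)
          + ∑ j : Fin (n + 1), (if (j : ℕ) = (s : ℕ) + 1 then (c s : ℝ) * q j else 0) := by
      rw [← Finset.sum_add_distrib]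
      refine Finset.sum_congr rfl fun j _ => ?_
      split_ifs <;> first | ring1 | (exfalso; omega)
    have e4 : ∑ j : Fin (n + 1), (if (j : ℕ) = (s : ℕ) + 1 then (c s : ℝ) * q j else 0)
        = (c s : ℝ) * q s.succ := by
      have h0 : ∀ j : Fin (n + 1), ((j : ℕ) = (s : ℕ) + 1) = (j = s.succ) := by
        intro j; simp [Fin.ext_iff]
      simp only [h0]
      rw [Finset.sum_ite_eq' Finset.univ s.succ]
      simp
    have hs := hsum s
    rw [← hc s] at hs
    have hs' : (∑ j : Fin (n + 1), if (j : ℕ) ≤ (s : ℕ) then (x s j : ℝ) * q j else 0)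
        + (c s : ℝ) * q s.succ = (δ : ℝ) := by
      have h := congrArg (fun z : ℤ => (z : ℝ)) hs
      push_cast at h
      convert h using 2
    rw [e1, e2, e3, e4, hs']
    ring
  have orth_v : ∀ s : Fin n, ∑ j : Fin (n + 1), A s j * crossProd A j = 0 := crossProd_orth A
  -- base case: coordinate 0
  have hbase : crossProd A 0 = (q 0 : ℝ) := by
    rw [crossProd]
    have hm : (Matrix.of fun i j : Fin n => A i (Fin.succAbove 0 j))
        = Matrix.of fun i j : Fin n => A i j.succ := by
      ext i j; simp [Fin.succAbove_zero]
    rw [hm]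
    have htri : Matrix.BlockTriangular (Matrix.of fun i j : Fin n => A i j.succ)
        OrderDual.toDual := by
      intro i j hij
      have hij' : (i : ℕ) < (j : ℕ) := hij
      simp only [Matrix.of_apply]
      rw [hA]
      simp only [Fin.val_succ]
      rw [if_neg (by omega : ¬((j : ℕ) + 1 ≤ (i : ℕ))),
        if_neg (by omega : ¬((j : ℕ) + 1 = (i : ℕ) + 1))]
    rw [Matrix.det_of_lowerTriangular _ htri]
    have hdiag : ∀ i : Fin n, (Matrix.of fun i j : Fin n => A i j.succ) i i = (c i : ℝ) := by
      intro i
      simp only [Matrix.of_apply]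
      rw [hA, ← hc i]
      simp only [Fin.val_succ]
      rw [if_neg (by omega : ¬((i : ℕ) + 1 ≤ (i : ℕ)))]
      simp
    simp only [hdiag]
    rw [← Nat.cast_prod]
    have hprod : (∏ i : Fin n, c i) = q 0 := by
      calc (∏ i : Fin n, c i)
          = ∏ i : Fin n, partialGcd q (i : ℕ) / partialGcd q ((i : ℕ) + 1) :=
            Finset.prod_congr rfl fun i _ => hc i
        _ = ∏ i ∈ Finset.range n, partialGcd q i / partialGcd q (i + 1) :=
            Fin.prod_univ_eq_prod_range (fun i => partialGcd q i / partialGcd q (i + 1)) n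
        _ = q 0 := by
            rw [prod_range_quot q hq0 n, partialGcd_last, hgcd, Nat.div_one,
              partialGcd_zero_eq]
    rw [hprod]
    simp
  -- strong induction on coordinates
  have main : ∀ k : Fin (n + 1), ∀ j : Fin (n + 1), j ≤ k → crossProd A j = (q j : ℝ) := by
    intro k
    induction k using Fin.induction with
    | zero =>
      intro j hj
      have hj0 : j = 0 := le_antisymm hj (Fin.zero_le _)
      rw [hj0]; exact hbase
    | succ i ih =>
      intro j hj
      by_cases hji : (j : ℕ) ≤ (i : ℕ)
      · exact ih j hji
      · have hj' : j = i.succ := by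
          have hle : (j : ℕ) ≤ (i : ℕ) + 1 := hj
          apply Fin.ext
          simp only [Fin.val_succ]
          omega
        subst hj'
        have hzero : ∑ j : Fin (n + 1), A i j * (crossProd A j - (q j : ℝ)) = 0 := by
          simp only [mul_sub, Finset.sum_sub_distrib]
          rw [orth_v i, orth_q i]; ring
        have hsingle : ∑ j : Fin (n + 1), A i j * (crossProd A j - (q j : ℝ))
            = (c i : ℝ) * (crossProd A i.succ - (q i.succ : ℝ)) := by
          rw [Finset.sum_eq_single i.succ]
          · congr 1
            rw [hA, ← hc i]
            simp only [Fin.val_succ]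
            rw [if_neg (by omega : ¬((i : ℕ) + 1 ≤ (i : ℕ)))]
            simp
          · intro b _ hb
            by_cases hbi : (b : ℕ) ≤ (i : ℕ)
            · rw [ih b hbi]; ring
            · have hb2 : ¬ ((b : ℕ) = (i : ℕ) + 1) := by
                intro h
                exact hb (Fin.ext (by simp [Fin.val_succ, h]))
              rw [hA]
              simp [hbi, hb2]
          · intro h; exact absurd (Finset.mem_univ _) h
        have hcne : (c i : ℝ) ≠ 0 := by
          simp only [ne_eq, Nat.cast_eq_zero]
          exact (hcpos i).ne'
        have hz := hsingle ▸ hzero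
        rcases mul_eq_zero.mp hz with h | h
        · exact absurd h hcne
        · linarith [sub_eq_zero.mp h]
  have hfun : crossProd A = (fun k => (q k : ℝ)) :=
    funext fun k => main k k le_rfl
  refine ⟨hfun, ?_⟩
  rw [hfun]
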